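/- The image of f_L := e^{Σ_{α∈Δ∖Δ_L} λ_α} in the quotient ring F_p[X_*(T)_-]/(e^{λ_β} : β ∈ Δ_L) is a regular (non-zero-divisor) element. -/

import Mathlib

/-!
Statement 7: With `λα` as before, and `Δ_L ⊆ Δ` a subset of the simple roots, the
image of `f_L := e^{Σ_{α ∈ Δ∖Δ_L} λ_α}` in the quotient ring
`F_p[X_*(T)_-] / (e^{λ_β} : β ∈ Δ_L)` is a regular (non-zero-divisor) element.
Concretely: if `a ∈ F_p[X_*(T)_-]` satisfies `f_L · a ∈ (e^{λ_β} : β ∈ Δ_L)`,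
then `a ∈ (e^{λ_β} : β ∈ Δ_L)`.
-/

/-- `{λ ∈ X : ⟨α i, λ⟩ ≤ 0 for all i ∈ S}`. -/
def antidomSubmonoid {X : Type} [AddCommGroup X] {ι : Type} (α : ι → X →+ ℤ)
    (S : Set ι) : AddSubmonoid X where
  carrier := {x | ∀ i ∈ S, α i x ≤ 0}
  zero_mem' := by intro i _; simp
  add_mem' := by
    intro a b ha hb i hi
    simpa [map_add] using add_nonpos (ha i hi) (hb i hi)

section Aux

variable {p : ℕ} {X : Type} [AddCommGroup X] {ι : Type}
  (α : ι → X →+ ℤ)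

lemma antidom_le (m : antidomSubmonoid α (Set.univ : Set ι)) (i : ι) :
    α i (m : X) ≤ 0 := m.2 i (Set.mem_univ i)

/-- Membership in the monomial ideal, characterized via supports. -/
lemma mem_span_singles_iff [NeZero p] (ΔL : Finset ι)
    (lam : ι → antidomSubmonoid α (Set.univ : Set ι))
    (a : AddMonoidAlgebra (ZMod p) (antidomSubmonoid α (Set.univ : Set ι))) :
    a ∈ Ideal.span ((fun j => AddMonoidAlgebra.single (lam j) (1 : ZMod p)) '' (ΔL : Set ι)) ↔
    ∀ x ∈ a.coeff.support, ∃ j ∈ ΔL, ∃ m : antidomSubmonoid α (Set.univ : Set ι),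
      x = lam j + m := by
  classical
  constructor
  · intro ha
    refine Submodule.span_induction (p := fun a _ => ∀ x ∈ a.coeff.support,
        ∃ j ∈ ΔL, ∃ m : antidomSubmonoid α (Set.univ : Set ι), x = lam j + m)
      ?_ ?_ ?_ ?_ ha
    · rintro _ ⟨j, hj, rfl⟩ x hx
      have := Finsupp.support_single_subset hx
      simp only [Finset.mem_singleton] at this
      exact ⟨j, hj, 0, by simp [this]⟩
    · intro x hx; simp at hx
    · intro f g _ _ hf hg x hx
      rw [AddMonoidAlgebra.coeff_add] at hx
      rcases Finset.mem_union.mp (Finsupp.support_add hx) with h | h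
      · exact hf x h
      · exact hg x h
    · intro r f _ hf x hx
      rw [smul_eq_mul] at hx
      rcases Finset.mem_add.mp (AddMonoidAlgebra.support_coeff_mul_subset r f hx) with ⟨u, hu, v, hv, rfl⟩
      obtain ⟨j, hj, m, rfl⟩ := hf v hv
      exact ⟨j, hj, u + m, by abel⟩
  · intro h
    rw [← AddMonoidAlgebra.sum_coeff_single a]
    refine Submodule.sum_mem _ (fun x hx => ?_)
    obtain ⟨j, hj, m, rfl⟩ := h x hx
    show AddMonoidAlgebra.single (lam j + m) (a.coeff (lam j + m)) ∈ _
    have : (AddMonoidAlgebra.single (lam j + m) (a.coeff (lam j + m)) :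
        AddMonoidAlgebra (ZMod p) (antidomSubmonoid α (Set.univ : Set ι)))
        = AddMonoidAlgebra.single (lam j) (1 : ZMod p)
          * AddMonoidAlgebra.single m (a.coeff (lam j + m)) := by
      rw [AddMonoidAlgebra.single_mul_single, one_mul]
    rw [this]
    exact Ideal.mul_mem_right _ _ (Ideal.subset_span ⟨j, hj, rfl⟩)

end Aux

theorem fL_regular_mod_levi_ideal
    (p : ℕ) [Fact p.Prime]
    {X : Type} [AddCommGroup X] {ι : Type} [Fintype ι] [DecidableEq ι]
    (α : ι → X →+ ℤ)
    (ΔL : Finset ι)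
    (lam : ι → antidomSubmonoid α (Set.univ : Set ι))   -- the elements λα
    (hneg : ∀ i, α i (lam i : X) < 0)
    (horth : ∀ i j, j ≠ i → α j (lam i : X) = 0) :
    letI J : Ideal (AddMonoidAlgebra (ZMod p) (antidomSubmonoid α (Set.univ : Set ι))) :=
      Ideal.span ((fun j => AddMonoidAlgebra.single (lam j) (1 : ZMod p)) '' (ΔL : Set ι))
    letI fL : AddMonoidAlgebra (ZMod p) (antidomSubmonoid α (Set.univ : Set ι)) :=
      AddMonoidAlgebra.single (∑ i ∈ ΔLᶜ, lam i) (1 : ZMod p)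
    ∀ a, fL * a ∈ J → a ∈ J := by
  intro a ha
  haveI : NeZero p := ⟨(Fact.out : p.Prime).ne_zero⟩
  set μ : antidomSubmonoid α (Set.univ : Set ι) := ∑ i ∈ ΔLᶜ, lam i with hμ
  -- key computation: α i μ = 0 for i ∈ ΔL
  have hμval : (μ : X) = ∑ i ∈ ΔLᶜ, (lam i : X) := by
    simp [hμ]
  have hμL : ∀ i ∈ ΔL, α i (μ : X) = 0 := by
    intro i hi
    rw [hμval, map_sum]
    refine Finset.sum_eq_zero (fun k hk => ?_)
    exact horth k i (fun h => (Finset.mem_compl.mp hk) (h ▸ hi))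
  rw [mem_span_singles_iff α ΔL lam] at ha ⊢
  intro x hx
  -- the coefficient of fL * a at μ + x is a x
  have hcoef : (AddMonoidAlgebra.single μ (1 : ZMod p) * a).coeff (μ + x) = a.coeff x := by
    have := AddMonoidAlgebra.coeff_single_mul_eq_mul_coeff (x := a) (r := (1 : ZMod p)) (m := μ) (m₁ := μ + x) x
      (fun z _ => by
        constructor
        · intro h
          apply Subtype.ext
          have h' := congrArg Subtype.val h
          push_cast at h'
          exact add_left_cancel h'
        · rintro rfl; rfl)
    rw [this, one_mul]
  have hmemsupp : μ + x ∈ (AddMonoidAlgebra.single μ (1 : ZMod p) * a).coeff.support := by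
    rw [Finsupp.mem_support_iff, hcoef]
    exact Finsupp.mem_support_iff.mp hx
  obtain ⟨j, hj, m, hm⟩ := ha (μ + x) hmemsupp
  -- in X : μ + x = lam j + m
  have hmX : (μ : X) + (x : X) = (lam j : X) + (m : X) := by
    have := congrArg (Subtype.val) hm
    simpa using this
  -- the element x - lam j lies in the antidominant submonoid
  have hmem : ((x : X) - (lam j : X)) ∈ antidomSubmonoid α (Set.univ : Set ι) := by
    intro i _
    by_cases hi : i ∈ ΔL
    · -- x - lam j = m - μ
      have h1 : (x : X) - (lam j : X) = (m : X) - (μ : X) := by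
        have := hmX
        linear_combination (norm := abel) this
      rw [h1, map_sub, hμL i hi, sub_zero]
      exact antidom_le α m i
    · have hij : i ≠ j := fun h => hi (h ▸ hj)
      rw [map_sub, horth j i hij, sub_zero]
      exact antidom_le α x i
  refine ⟨j, hj, ⟨(x : X) - (lam j : X), hmem⟩, ?_⟩
  apply Subtype.ext
  simp
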